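/- Elliptical potential lemma used to verify the Eluder-type condition for Lin-UCB: let d and T be positive integers, λ ≥ 1 a real number, and φ₁, …, φ_T ∈ ℝ^d vectors with Euclidean norm ‖φ_t‖₂ ≤ 1 for all t. Define the d×d matrices Λ₀ = λ·I_d and Λ_t = Λ_{t-1} + φ_t φ_tᵀ for t = 1, …, T. Then every Λ_t is positive definite (hence invertible), and ∑_{t=1}^T φ_tᵀ Λ_{t-1}^{-1} φ_t ≤ 2·d·log( 1 + T/(λ·d) ). -/

import Mathlib

open Real Finset Matrix

private lemma ep_psd_vecMulVec {d : ℕ} (v : Fin d → ℝ) : (Matrix.vecMulVec v v).PosSemidef := by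
  rw [Matrix.vecMulVec_eq Unit]
  have h : Matrix.replicateRow Unit v = (Matrix.replicateCol Unit v)ᴴ := by
    rw [Matrix.conjTranspose_replicateCol]; simp
  rw [h]
  exact Matrix.posSemidef_self_mul_conjTranspose _

private lemma ep_posdef {d : ℕ} {lam : ℝ} (hlam : 0 < lam) (φ : ℕ → (Fin d → ℝ)) (t : ℕ) :
    (lam • (1 : Matrix (Fin d) (Fin d) ℝ)
        + ∑ s ∈ Finset.range t, Matrix.vecMulVec (φ s) (φ s)).PosDef := by
  refine Matrix.PosDef.add_posSemidef ?_ ?_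
  · rw [Matrix.smul_one_eq_diagonal]
    exact Matrix.posDef_diagonal_iff.mpr fun i => hlam
  · refine Finset.sum_induction _ _ (fun a b ha hb => ha.add hb) Matrix.PosSemidef.zero ?_
    exact fun s _ => ep_psd_vecMulVec (φ s)

private lemma ep_det_step {d : ℕ} (A : Matrix (Fin d) (Fin d) ℝ) (hA : A.PosDef) (v : Fin d → ℝ) :
    (A + Matrix.vecMulVec v v).det = A.det * (1 + v ⬝ᵥ A⁻¹ *ᵥ v) := by
  rw [Matrix.vecMulVec_eq Unit, Matrix.det_add_replicateCol_mul_replicateRow hA.det_pos.ne'.isUnit]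
  congr 1
  rw [Matrix.det_unique]
  simp only [Matrix.add_apply, Matrix.one_apply_eq, Matrix.mul_apply, Matrix.replicateRow_apply,
    Matrix.replicateCol_apply, Matrix.mulVec, dotProduct]
  congr 1
  simp_rw [Finset.sum_mul, Finset.mul_sum]
  rw [Finset.sum_comm]
  refine Finset.sum_congr rfl fun j _ => Finset.sum_congr rfl fun i _ => by ring

private lemma ep_w_bounds {d : ℕ} {lam : ℝ} (hlam : 1 ≤ lam) (A : Matrix (Fin d) (Fin d) ℝ)
    (hA : A.PosDef) (hlow : ∀ x : Fin d → ℝ, lam * (x ⬝ᵥ x) ≤ x ⬝ᵥ (A *ᵥ x))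
    (v : Fin d → ℝ) (hv : ∑ i, v i ^ 2 ≤ 1) :
    0 ≤ v ⬝ᵥ (A⁻¹ *ᵥ v) ∧ v ⬝ᵥ (A⁻¹ *ᵥ v) ≤ 1 := by
  set y := A⁻¹ *ᵥ v with hy
  have hAy : A *ᵥ y = v := by
    rw [hy, Matrix.mulVec_mulVec, Matrix.mul_nonsing_inv _ hA.det_pos.ne'.isUnit,
      Matrix.one_mulVec]
  have h1 : lam * (y ⬝ᵥ y) ≤ v ⬝ᵥ y := by
    have := hlow y
    rw [hAy] at this; rwa [dotProduct_comm v y]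
  have hyy : y ⬝ᵥ y = ∑ i, y i ^ 2 := by simp [dotProduct, sq]
  have hcs : (v ⬝ᵥ y) ^ 2 ≤ (∑ i, v i ^ 2) * (∑ i, y i ^ 2) := by
    simpa [dotProduct] using Finset.sum_mul_sq_le_sq_mul_sq Finset.univ v y
  have hb0 : (0:ℝ) ≤ ∑ i, y i ^ 2 := Finset.sum_nonneg fun i _ => sq_nonneg _
  have ha0 : (0:ℝ) ≤ ∑ i, v i ^ 2 := Finset.sum_nonneg fun i _ => sq_nonneg _
  rw [hyy] at h1
  constructor
  · nlinarith
  · nlinarith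

private lemma ep_trace_eq_sum_eig {d : ℕ} (A : Matrix (Fin d) (Fin d) ℝ) (hA : A.IsHermitian) :
    A.trace = ∑ i, hA.eigenvalues i := by
  nth_rewrite 1 [hA.spectral_theorem]
  rw [Unitary.conjStarAlgAut_apply]
  rw [Matrix.trace_mul_cycle]
  rw [show (star (hA.eigenvectorUnitary : Matrix (Fin d) (Fin d) ℝ))
      * (hA.eigenvectorUnitary : Matrix (Fin d) (Fin d) ℝ) = 1 from
    Matrix.mem_unitaryGroup_iff'.mp (hA.eigenvectorUnitary).2]
  rw [Matrix.one_mul, Matrix.trace_diagonal]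
  simp

private lemma ep_trace_vecMulVec {d : ℕ} (v : Fin d → ℝ) :
    (Matrix.vecMulVec v v).trace = ∑ i, v i ^ 2 := by
  simp [Matrix.trace, Matrix.diag, Matrix.vecMulVec_apply, sq]

private lemma ep_det_le_trace_pow {d : ℕ} (hd : 0 < d) (A : Matrix (Fin d) (Fin d) ℝ)
    (hA : A.PosDef) : A.det ≤ (A.trace / d) ^ d := by
  have hd' : (d:ℝ) ≠ 0 := Nat.cast_ne_zero.mpr hd.ne'
  set μ := hA.isHermitian.eigenvalues with hμdef
  have hμ : ∀ i, 0 < μ i := hA.eigenvalues_pos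
  have hdet : A.det = ∏ i, μ i := by simpa using hA.isHermitian.det_eq_prod_eigenvalues
  have htr : A.trace = ∑ i, μ i := ep_trace_eq_sum_eig A hA.isHermitian
  have amgm : ∏ i, μ i ^ ((d:ℝ)⁻¹) ≤ A.trace / d := by
    have h := Real.geom_mean_le_arith_mean_weighted Finset.univ (fun _ => (d:ℝ)⁻¹) μ
      (fun i _ => by positivity) (by simp [Finset.card_univ, hd']) (fun i _ => (hμ i).le)
    rw [htr]
    calc ∏ i, μ i ^ ((d:ℝ)⁻¹) ≤ ∑ i, (d:ℝ)⁻¹ * μ i := h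
      _ = (∑ i, μ i) / d := by rw [← Finset.mul_sum]; ring
  have key : ∀ i, (μ i ^ ((d:ℝ)⁻¹)) ^ (d:ℕ) = μ i := fun i => by
    rw [← Real.rpow_natCast (μ i ^ ((d:ℝ)⁻¹)) d, ← Real.rpow_mul (hμ i).le,
      inv_mul_cancel₀ hd', Real.rpow_one]
  calc A.det = ∏ i, (μ i ^ ((d:ℝ)⁻¹)) ^ (d:ℕ) := by
        rw [hdet]; exact Finset.prod_congr rfl fun i _ => (key i).symm
    _ = (∏ i, μ i ^ ((d:ℝ)⁻¹)) ^ (d:ℕ) := by rw [Finset.prod_pow]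
    _ ≤ (A.trace / d) ^ d :=
        pow_le_pow_left₀ (Finset.prod_nonneg fun i _ => Real.rpow_nonneg (hμ i).le _) amgm d

private lemma ep_le_two_log {x : ℝ} (h0 : 0 ≤ x) (h1 : x ≤ 1) : x ≤ 2 * Real.log (1 + x) := by
  have hx : (0:ℝ) < 1 + x := by linarith
  have h := Real.log_le_sub_one_of_pos (inv_pos.mpr hx)
  rw [Real.log_inv] at h
  have hinv : (1+x) * (1+x)⁻¹ = 1 := mul_inv_cancel₀ hx.ne'
  have hinv0 : (0:ℝ) ≤ (1+x)⁻¹ := inv_nonneg.mpr hx.le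
  nlinarith [h, hinv, hinv0]

/-- Elliptical potential lemma used to verify the Eluder-type condition for Lin-UCB. -/
theorem elliptical_potential
    (d T : ℕ) (hd : 0 < d) (hT : 0 < T) (lam : ℝ) (hlam : 1 ≤ lam)
    (φ : ℕ → (Fin d → ℝ))
    (hφ : ∀ t ∈ Finset.range T, Real.sqrt (∑ i, (φ t i) ^ 2) ≤ 1)
    (Λ : ℕ → Matrix (Fin d) (Fin d) ℝ)
    (hΛ : ∀ t, Λ t = lam • (1 : Matrix (Fin d) (Fin d) ℝ)
        + ∑ s ∈ Finset.range t, Matrix.vecMulVec (φ s) (φ s)) :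
    (∀ t ≤ T, (Λ t).PosDef) ∧
    ∑ t ∈ Finset.range T, φ t ⬝ᵥ ((Λ t)⁻¹ *ᵥ φ t)
      ≤ 2 * d * Real.log (1 + T / (lam * d)) := by
  have hd' : (0:ℝ) < d := Nat.cast_pos.mpr hd
  have hlam0 : (0:ℝ) < lam := lt_of_lt_of_le one_pos hlam
  have hPD : ∀ t, (Λ t).PosDef := fun t => by rw [hΛ]; exact ep_posdef hlam0 φ t
  refine ⟨fun t _ => hPD t, ?_⟩
  set w : ℕ → ℝ := fun t => φ t ⬝ᵥ ((Λ t)⁻¹ *ᵥ φ t) with hwdef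
  have hφ2 : ∀ t ∈ Finset.range T, ∑ i, (φ t i)^2 ≤ 1 := by
    intro t ht
    have h := hφ t ht
    have h0 : (0:ℝ) ≤ ∑ i, (φ t i)^2 := Finset.sum_nonneg fun i _ => sq_nonneg _
    nlinarith [Real.sq_sqrt h0, Real.sqrt_nonneg (∑ i, (φ t i)^2)]
  have hlow : ∀ t, ∀ x : Fin d → ℝ, lam * (x ⬝ᵥ x) ≤ x ⬝ᵥ (Λ t *ᵥ x) := by
    intro t x
    rw [hΛ, Matrix.add_mulVec, dotProduct_add, Matrix.smul_mulVec,
      Matrix.one_mulVec]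
    have hpsd : (∑ s ∈ Finset.range t, Matrix.vecMulVec (φ s) (φ s)).PosSemidef := by
      refine Finset.sum_induction _ _ (fun a b ha hb => ha.add hb) Matrix.PosSemidef.zero ?_
      exact fun s _ => ep_psd_vecMulVec (φ s)
    have h2 := hpsd.dotProduct_mulVec_nonneg x
    rw [star_trivial] at h2
    have : x ⬝ᵥ (lam • (Λ t *ᵥ x - Λ t *ᵥ x + x)) = lam * (x ⬝ᵥ x) := by
      simp [dotProduct_smul, smul_eq_mul]
    simp only [dotProduct_smul, smul_eq_mul]
    linarith
  have hwb : ∀ t ∈ Finset.range T, 0 ≤ w t ∧ w t ≤ 1 := fun t ht =>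
    ep_w_bounds hlam (Λ t) (hPD t) (hlow t) (φ t) (hφ2 t ht)
  have hdet : ∀ t, (Λ (t+1)).det = (Λ t).det * (1 + w t) := by
    intro t
    have hst : Λ (t+1) = Λ t + Matrix.vecMulVec (φ t) (φ t) := by
      rw [hΛ, hΛ, Finset.sum_range_succ, add_assoc]
    rw [hst, ep_det_step (Λ t) (hPD t) (φ t)]
  have hdetpos : ∀ t, 0 < (Λ t).det := fun t => (hPD t).det_pos
  have hw1pos : ∀ t, 0 < 1 + w t := by
    intro t
    have h1 := hdet t
    have h2 := hdetpos (t+1)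
    have h3 := hdetpos t
    nlinarith
  have hlogsum : ∀ n, ∑ t ∈ Finset.range n, Real.log (1 + w t)
      = Real.log ((Λ n).det) - Real.log ((Λ 0).det) := by
    intro n
    induction n with
    | zero => simp
    | succ n ih =>
      rw [Finset.sum_range_succ, ih, hdet n,
        Real.log_mul (hdetpos n).ne' (hw1pos n).ne']
      ring
  have hdet0 : (Λ 0).det = lam ^ d := by
    rw [hΛ]
    simp [Matrix.det_smul]
  have htrace : (Λ T).trace ≤ lam * d + T := by
    rw [hΛ, Matrix.trace_add, Matrix.trace_smul, Matrix.trace_one, Matrix.trace_sum]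
    have hsum : ∑ s ∈ Finset.range T, (Matrix.vecMulVec (φ s) (φ s)).trace
        ≤ ∑ s ∈ Finset.range T, (1:ℝ) := by
      refine Finset.sum_le_sum fun s hs => ?_
      rw [ep_trace_vecMulVec]
      exact hφ2 s hs
    simp only [Finset.sum_const, Finset.card_range, nsmul_eq_mul, mul_one] at hsum
    simp only [Fintype.card_fin, smul_eq_mul]
    linarith
  have htrace0 : (0:ℝ) ≤ (Λ T).trace := by
    rw [ep_trace_eq_sum_eig (Λ T) (hPD T).isHermitian]
    exact Finset.sum_nonneg fun i _ => ((hPD T).eigenvalues_pos i).le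
  have hdetT : (Λ T).det ≤ (lam + T/d) ^ d := by
    calc (Λ T).det ≤ ((Λ T).trace / d) ^ d := ep_det_le_trace_pow hd _ (hPD T)
      _ ≤ (lam + T/d) ^ d := by
          refine pow_le_pow_left₀ (div_nonneg htrace0 hd'.le) ?_ d
          rw [div_le_iff₀ hd']
          calc (Λ T).trace ≤ lam * d + T := htrace
            _ = (lam + T/d) * d := by field_simp
  have hpos1 : (0:ℝ) < lam + T/d := by positivity
  calc ∑ t ∈ Finset.range T, w t ≤ ∑ t ∈ Finset.range T, 2 * Real.log (1 + w t) :=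
        Finset.sum_le_sum fun t ht => ep_le_two_log (hwb t ht).1 (hwb t ht).2
    _ = 2 * ∑ t ∈ Finset.range T, Real.log (1 + w t) := by rw [Finset.mul_sum]
    _ = 2 * (Real.log ((Λ T).det) - Real.log ((Λ 0).det)) := by rw [hlogsum T]
    _ ≤ 2 * (Real.log ((lam + T/d) ^ d) - Real.log (lam ^ d)) := by
        have hle : Real.log ((Λ T).det) ≤ Real.log ((lam + T/d) ^ d) :=
          Real.log_le_log (hdetpos T) hdetT
        rw [hdet0]
        linarith
    _ = 2 * d * Real.log (1 + T / (lam * d)) := by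
        rw [Real.log_pow, Real.log_pow, ← mul_sub, ← Real.log_div hpos1.ne' hlam0.ne']
        have heq : (lam + (T:ℝ)/(d:ℝ))/lam = 1 + (T:ℝ) / (lam * (d:ℝ)) := by
          rw [add_div, div_self hlam0.ne', div_div, mul_comm (d:ℝ) lam]
        rw [heq]
        ring
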